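/- Let Q_m be the Markov discretization operator defined by Q_m f = f_1 ψ_0 + Σ_{i=1}^{m-1} ((f_i + f_{i+1})/2) ψ_i + f_m ψ_m, where f_i = m ∫_{I_i} f dλ. Then for every Lipschitz function f on [0,1], Lip(Q_m f) ≤ (3/2) Lip(f). -/

import Mathlib

/-- The standard hat function `ψ_i` over the uniform partition `{i/m}` of `[0,1]`. -/
noncomputable def hat (m i : ℕ) (x : ℝ) : ℝ := max 0 (1 - |(m : ℝ) * x - (i : ℝ)|)

/-- The average of `f` over the cell `I_i = [(i-1)/m, i/m]`: `f_i = m ∫_{I_i} f dλ`. -/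
noncomputable def cellAvg (m : ℕ) (f : ℝ → ℝ) (i : ℕ) : ℝ :=
  (m : ℝ) * ∫ x in (((i : ℝ) - 1) / (m : ℝ))..((i : ℝ) / (m : ℝ)), f x

/-- The Markov (Ding–Li) discretization
`Q_m f = f_1 ψ_0 + ∑_{i=1}^{m-1} ((f_i + f_{i+1})/2) ψ_i + f_m ψ_m`. -/
noncomputable def Qm (m : ℕ) (f : ℝ → ℝ) (x : ℝ) : ℝ :=
  cellAvg m f 1 * hat m 0 x
    + (∑ i ∈ Finset.Ioo 0 m, ((cellAvg m f i + cellAvg m f (i + 1)) / 2) * hat m i x)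
    + cellAvg m f m * hat m m x

noncomputable def nodal (m : ℕ) (f : ℝ → ℝ) (j : ℕ) : ℝ :=
  if j = 0 then cellAvg m f 1 else if j = m then cellAvg m f m
  else (cellAvg m f j + cellAvg m f (j + 1)) / 2

lemma hat_eq_zero {m i j : ℕ} {x : ℝ} (hm : 0 < m)
    (hx1 : (j : ℝ) / m ≤ x) (hx2 : x ≤ ((j : ℝ) + 1) / m)
    (h1 : i ≠ j) (h2 : i ≠ j + 1) : hat m i x = 0 := by
  have hm' : (0:ℝ) < m := by exact_mod_cast hm
  have hA : (j : ℝ) ≤ m * x := by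
    rw [div_le_iff₀ hm'] at hx1; linarith [hx1]
  have hB : m * x ≤ (j : ℝ) + 1 := by
    rw [le_div_iff₀ hm'] at hx2; linarith [hx2]
  have habs : 1 ≤ |(m:ℝ) * x - i| := by
    rcases lt_or_gt_of_ne h1 with hij | hij
    · have : (i : ℝ) + 1 ≤ j := by exact_mod_cast hij
      have : (m:ℝ) * x - i ≥ 1 := by linarith
      calc (1:ℝ) ≤ (m:ℝ) * x - i := this
        _ ≤ |(m:ℝ) * x - i| := le_abs_self _
    · have hij' : j + 2 ≤ i := by omega
      have : (j : ℝ) + 2 ≤ i := by exact_mod_cast hij'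
      have h3 : (i:ℝ) - (m:ℝ) * x ≥ 1 := by linarith
      calc (1:ℝ) ≤ (i:ℝ) - (m:ℝ) * x := h3
        _ = -((m:ℝ) * x - i) := by ring
        _ ≤ |(m:ℝ) * x - i| := neg_le_abs _
  unfold hat
  have : 1 - |(m:ℝ) * x - i| ≤ 0 := by linarith
  exact max_eq_left this

lemma hat_left {m j : ℕ} {x : ℝ} (hx2 : (m:ℝ) * x ≤ (j : ℝ) + 1) (hx1 : (j:ℝ) ≤ (m:ℝ) * x) :
    hat m j x = (j : ℝ) + 1 - m * x := by
  unfold hat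
  rw [abs_of_nonneg (by linarith)]
  rw [max_eq_right (by linarith)]
  ring

lemma hat_right {m j : ℕ} {x : ℝ} (hx2 : (m:ℝ) * x ≤ (j : ℝ) + 1) (hx1 : (j:ℝ) ≤ (m:ℝ) * x) :
    hat m (j+1) x = (m:ℝ) * x - j := by
  unfold hat
  push_cast
  rw [abs_of_nonpos (by linarith)]
  rw [max_eq_right (by linarith)]
  ring

lemma Qm_eq_sum (m : ℕ) (hm : 1 ≤ m) (f : ℝ → ℝ) (x : ℝ) :
    Qm m f x = ∑ i ∈ Finset.range (m + 1), nodal m f i * hat m i x := by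
  have h1 : Finset.range (m+1) = insert 0 (insert m (Finset.Ioo 0 m)) := by
    ext i
    simp [Finset.mem_Ioo, Finset.mem_range]
    omega
  rw [h1, Finset.sum_insert (by simp [Finset.mem_Ioo]; omega),
    Finset.sum_insert (by simp [Finset.mem_Ioo])]
  have hn0 : nodal m f 0 = cellAvg m f 1 := by simp [nodal]
  have hnm : nodal m f m = cellAvg m f m := by
    simp [nodal]; intro h; omega
  have hni : ∀ i ∈ Finset.Ioo 0 m, nodal m f i * hat m i x
      = ((cellAvg m f i + cellAvg m f (i + 1)) / 2) * hat m i x := by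
    intro i hi
    simp only [Finset.mem_Ioo] at hi
    rw [nodal, if_neg (by omega), if_neg (by omega)]
  rw [Finset.sum_congr rfl hni, hn0, hnm]
  unfold Qm
  ring
lemma Qm_cell (m j : ℕ) (hm : 1 ≤ m) (hj : j < m) (f : ℝ → ℝ) (x : ℝ)
    (hx1 : (j : ℝ) / m ≤ x) (hx2 : x ≤ ((j : ℝ) + 1) / m) :
    Qm m f x = nodal m f j * ((j : ℝ) + 1 - m * x) + nodal m f (j + 1) * ((m : ℝ) * x - j) := by
  have hm' : (0:ℝ) < m := by exact_mod_cast hm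
  have hA : (j : ℝ) ≤ m * x := by rw [div_le_iff₀ hm'] at hx1; linarith
  have hB : m * x ≤ (j : ℝ) + 1 := by rw [le_div_iff₀ hm'] at hx2; linarith
  rw [Qm_eq_sum m hm f x]
  have hsub : ({j, j+1} : Finset ℕ) ⊆ Finset.range (m+1) := by
    intro i hi
    simp only [Finset.mem_insert, Finset.mem_singleton] at hi
    simp only [Finset.mem_range]
    omega
  rw [← Finset.sum_subset hsub]
  · rw [Finset.sum_pair (by omega : j ≠ j + 1)]
    rw [hat_left hB hA, hat_right hB hA]
  · intro i _ hi
    simp only [Finset.mem_insert, Finset.mem_singleton, not_or] at hi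
    rw [hat_eq_zero hm hx1 hx2 hi.1 hi.2, mul_zero]
lemma avg_adjacent (m i : ℕ) (hi : 1 ≤ i) (hi2 : i + 1 ≤ m)
    (f : ℝ → ℝ) (L : ℝ) (hL : 0 ≤ L)
    (hlip : ∀ x ∈ Set.Icc (0:ℝ) 1, ∀ y ∈ Set.Icc (0:ℝ) 1, |f x - f y| ≤ L * |x - y|) :
    |cellAvg m f (i + 1) - cellAvg m f i| ≤ L / m := by
  have hm : 1 ≤ m := by omega
  have hm' : (0:ℝ) < m := by exact_mod_cast hm
  have hi' : (1:ℝ) ≤ i := by exact_mod_cast hi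
  have hi2' : (i:ℝ) + 1 ≤ m := by exact_mod_cast hi2
  set a : ℝ := ((i:ℝ) - 1) / m with ha
  set b : ℝ := (i:ℝ) / m with hb
  have hab : a ≤ b := by
    rw [ha, hb]; gcongr; linarith
  have ha0 : 0 ≤ a := div_nonneg (by linarith) hm'.le
  have hb1 : b + 1/m ≤ 1 := by
    rw [← add_div, div_le_one hm']; linarith
  -- continuity of f on [0,1]
  have hlipOn : LipschitzOnWith L.toNNReal f (Set.Icc 0 1) := by
    intro x hx y hy
    rw [edist_dist, edist_dist, Real.dist_eq, Real.dist_eq]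
    rw [← ENNReal.ofReal_coe_nnreal, ← ENNReal.ofReal_mul (by positivity)]
    apply ENNReal.ofReal_le_ofReal
    rw [Real.coe_toNNReal L hL]
    exact hlip x hx y hy
  have hcont : ContinuousOn f (Set.Icc 0 1) := hlipOn.continuousOn
  have hmaps1 : Set.uIcc a b ⊆ Set.Icc (0:ℝ) 1 := by
    rw [Set.uIcc_of_le hab]
    intro x hx
    have h1 : (0:ℝ) < 1/m := by positivity
    exact ⟨by linarith [hx.1], by linarith [hx.2]⟩
  have hint1 : IntervalIntegrable f MeasureTheory.volume a b :=
    (hcont.mono hmaps1).intervalIntegrable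
  have hmaps2 : ∀ x ∈ Set.uIcc a b, x + 1/m ∈ Set.Icc (0:ℝ) 1 := by
    intro x hx
    rw [Set.uIcc_of_le hab] at hx
    have h1 : (0:ℝ) < 1/m := by positivity
    exact ⟨by linarith [hx.1, ha0], by linarith [hx.2]⟩
  have hint2 : IntervalIntegrable (fun x => f (x + 1/m)) MeasureTheory.volume a b := by
    apply ContinuousOn.intervalIntegrable
    exact hcont.comp ((continuous_id.add continuous_const).continuousOn) hmaps2
  -- rewrite cellAvg (i+1) as shifted integral
  have hshift : cellAvg m f (i+1) = (m:ℝ) * ∫ x in a..b, f (x + 1/m) := by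
    have e1 : (((i:ℝ)+1) - 1)/(m:ℝ) = a + 1/m := by rw [ha]; ring
    have e2 : ((i:ℝ)+1)/(m:ℝ) = b + 1/m := by rw [hb]; ring
    rw [cellAvg]
    push_cast
    rw [e1, e2, ← intervalIntegral.integral_comp_add_right (fun x => f x) (1/(m:ℝ))]
  have hcell : cellAvg m f i = (m:ℝ) * ∫ x in a..b, f x := rfl
  have hdiff : cellAvg m f (i+1) - cellAvg m f i
      = (m:ℝ) * ∫ x in a..b, (f (x + 1/m) - f x) := by
    rw [hshift, hcell, intervalIntegral.integral_sub hint2 hint1]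
    ring
  rw [hdiff, abs_mul, abs_of_pos hm']
  have hbound : ‖∫ x in a..b, (f (x + 1/m) - f x)‖ ≤ (L/m) * |b - a| := by
    apply intervalIntegral.norm_integral_le_of_norm_le_const
    intro x hx
    have hx' : x ∈ Set.uIcc a b := by
      rw [Set.uIcc_of_le hab]
      exact Set.Ioc_subset_Icc_self (by rwa [Set.uIoc_of_le hab] at hx)
    have h1 := hlip (x + 1/m) (hmaps2 x hx') x (hmaps1 hx')
    rw [Real.norm_eq_abs]
    calc |f (x + 1/m) - f x| ≤ L * |x + 1/m - x| := h1
      _ = L * (1/m) := by rw [show x + 1/m - x = 1/m by ring, abs_of_pos (by positivity)]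
      _ = L / m := by ring
  have hba : |b - a| = 1/m := by
    rw [ha, hb, div_sub_div_same, show (i:ℝ) - ((i:ℝ)-1) = 1 by ring,
      abs_of_pos (by positivity)]
  rw [Real.norm_eq_abs] at hbound
  rw [hba] at hbound
  calc (m:ℝ) * |∫ x in a..b, (f (x + 1/m) - f x)| ≤ (m:ℝ) * ((L/m) * (1/m)) := by
        apply mul_le_mul_of_nonneg_left hbound hm'.le
    _ = L / m := by field_simp
lemma nodal_diff (m j : ℕ) (hm : 1 ≤ m) (hj : j < m)
    (f : ℝ → ℝ) (L : ℝ) (hL : 0 ≤ L)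
    (hlip : ∀ x ∈ Set.Icc (0:ℝ) 1, ∀ y ∈ Set.Icc (0:ℝ) 1, |f x - f y| ≤ L * |x - y|) :
    |nodal m f (j + 1) - nodal m f j| ≤ L / m := by
  have hm' : (0:ℝ) < m := by exact_mod_cast hm
  have hLm : 0 ≤ L / m := by positivity
  rcases Nat.eq_or_lt_of_le hm with hm1 | hm2
  · -- m = 1, j = 0
    have hm1 : m = 1 := hm1.symm
    have hj0 : j = 0 := by omega
    subst hm1; subst hj0
    simp [nodal]
    exact hL
  · -- m ≥ 2
    rcases Nat.eq_zero_or_pos j with hj0 | hj1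
    · subst hj0
      have h1 : nodal m f 0 = cellAvg m f 1 := by simp [nodal]
      have h2 : nodal m f 1 = (cellAvg m f 1 + cellAvg m f 2) / 2 := by
        rw [nodal, if_neg (by omega), if_neg (by omega)]
      rw [h1, h2]
      have := avg_adjacent m 1 le_rfl (by omega) f L hL hlip
      norm_num at this
      rw [show (cellAvg m f 1 + cellAvg m f 2) / 2 - cellAvg m f 1
        = (cellAvg m f 2 - cellAvg m f 1) / 2 by ring, abs_div, abs_two]
      linarith [abs_nonneg (cellAvg m f 2 - cellAvg m f 1)]
    · rcases Nat.eq_or_lt_of_le (by omega : j + 1 ≤ m) with hjm | hjm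
      · -- j + 1 = m
        have h1 : nodal m f (j+1) = cellAvg m f (j+1) := by
          rw [nodal, if_neg (by omega), if_pos hjm, hjm]
        have h2 : nodal m f j = (cellAvg m f j + cellAvg m f (j+1)) / 2 := by
          rw [nodal, if_neg (by omega), if_neg (by omega)]
        rw [h1, h2]
        have := avg_adjacent m j hj1 (by omega) f L hL hlip
        rw [show cellAvg m f (j+1) - (cellAvg m f j + cellAvg m f (j+1)) / 2
          = (cellAvg m f (j+1) - cellAvg m f j) / 2 by ring]
        rw [abs_div, abs_two]
        linarith [abs_nonneg (cellAvg m f (j+1) - cellAvg m f j)]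
      · -- interior
        have h1 : nodal m f (j+1) = (cellAvg m f (j+1) + cellAvg m f (j+2)) / 2 := by
          rw [nodal, if_neg (by omega), if_neg (by omega)]
        have h2 : nodal m f j = (cellAvg m f j + cellAvg m f (j+1)) / 2 := by
          rw [nodal, if_neg (by omega), if_neg (by omega)]
        rw [h1, h2]
        have ha := avg_adjacent m j hj1 (by omega) f L hL hlip
        have hb := avg_adjacent m (j+1) (by omega) (by omega) f L hL hlip
        rw [show (cellAvg m f (j+1) + cellAvg m f (j+2)) / 2
            - (cellAvg m f j + cellAvg m f (j+1)) / 2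
          = ((cellAvg m f (j+1+1) - cellAvg m f (j+1))
            + (cellAvg m f (j+1) - cellAvg m f j)) / 2 by norm_num; ring]
        rw [abs_div, abs_two]
        have := abs_add_le (cellAvg m f (j+1+1) - cellAvg m f (j+1))
          (cellAvg m f (j+1) - cellAvg m f j)
        linarith

lemma lip_cell (m j : ℕ) (hm : 1 ≤ m) (hj : j < m)
    (f : ℝ → ℝ) (L : ℝ) (hL : 0 ≤ L)
    (hlip : ∀ x ∈ Set.Icc (0:ℝ) 1, ∀ y ∈ Set.Icc (0:ℝ) 1, |f x - f y| ≤ L * |x - y|) :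
    ∀ x ∈ Set.Icc ((j:ℝ)/m) (((j:ℝ)+1)/m), ∀ y ∈ Set.Icc ((j:ℝ)/m) (((j:ℝ)+1)/m),
      |Qm m f x - Qm m f y| ≤ (3/2) * L * |x - y| := by
  intro x hx y hy
  have hm' : (0:ℝ) < m := by exact_mod_cast hm
  rw [Qm_cell m j hm hj f x hx.1 hx.2, Qm_cell m j hm hj f y hy.1 hy.2]
  have heq : nodal m f j * ((j : ℝ) + 1 - m * x) + nodal m f (j + 1) * ((m : ℝ) * x - j)
      - (nodal m f j * ((j : ℝ) + 1 - m * y) + nodal m f (j + 1) * ((m : ℝ) * y - j))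
      = (m : ℝ) * (nodal m f (j+1) - nodal m f j) * (x - y) := by ring
  rw [heq, abs_mul, abs_mul, abs_of_pos hm']
  have hnd := nodal_diff m j hm hj f L hL hlip
  have : (m:ℝ) * |nodal m f (j+1) - nodal m f j| ≤ L := by
    calc (m:ℝ) * |nodal m f (j+1) - nodal m f j| ≤ (m:ℝ) * (L/m) :=
          mul_le_mul_of_nonneg_left hnd hm'.le
      _ = L := by field_simp
  calc (m:ℝ) * |nodal m f (j+1) - nodal m f j| * |x - y| ≤ L * |x - y| :=
        mul_le_mul_of_nonneg_right this (abs_nonneg _)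
    _ ≤ (3/2) * L * |x - y| := by nlinarith [abs_nonneg (x - y)]

lemma lip_glue {g : ℝ → ℝ} {K a b c : ℝ} (hK : 0 ≤ K) (hab : a ≤ b) (hbc : b ≤ c)
    (h1 : ∀ x ∈ Set.Icc a b, ∀ y ∈ Set.Icc a b, |g x - g y| ≤ K * |x - y|)
    (h2 : ∀ x ∈ Set.Icc b c, ∀ y ∈ Set.Icc b c, |g x - g y| ≤ K * |x - y|) :
    ∀ x ∈ Set.Icc a c, ∀ y ∈ Set.Icc a c, |g x - g y| ≤ K * |x - y| := by
  intro x hx y hy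
  rcases le_total x b with h | h <;> rcases le_total y b with h' | h'
  · exact h1 x ⟨hx.1, h⟩ y ⟨hy.1, h'⟩
  · calc |g x - g y| ≤ |g x - g b| + |g b - g y| := abs_sub_le _ _ _
      _ ≤ K * |x - b| + K * |b - y| := add_le_add
          (h1 x ⟨hx.1, h⟩ b ⟨hab, le_rfl⟩) (h2 b ⟨le_rfl, hbc⟩ y ⟨h', hy.2⟩)
      _ = K * (b - x) + K * (y - b) := by
          rw [abs_of_nonpos (by linarith), abs_of_nonpos (by linarith)]; ring
      _ = K * (y - x) := by ring
      _ = K * |x - y| := by rw [abs_of_nonpos (by linarith)]; ring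
  · calc |g x - g y| ≤ |g x - g b| + |g b - g y| := abs_sub_le _ _ _
      _ ≤ K * |x - b| + K * |b - y| := add_le_add
          (h2 x ⟨h, hx.2⟩ b ⟨le_rfl, hbc⟩) (h1 b ⟨hab, le_rfl⟩ y ⟨hy.1, h'⟩)
      _ = K * (x - b) + K * (b - y) := by
          rw [abs_of_nonneg (by linarith), abs_of_nonneg (by linarith)]
      _ = K * (x - y) := by ring
      _ = K * |x - y| := by rw [abs_of_nonneg (by linarith)]
  · exact h2 x ⟨h, hx.2⟩ y ⟨h', hy.2⟩

/-- for Lipschitz `f`, `Lip(Q_m f) ≤ (3/2) Lip(f)`. -/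
theorem stmt_9 (m : ℕ) (hm : 1 ≤ m) (f : ℝ → ℝ) (L : ℝ) (hL : 0 ≤ L)
    (hlip : ∀ x ∈ Set.Icc (0:ℝ) 1, ∀ y ∈ Set.Icc (0:ℝ) 1, |f x - f y| ≤ L * |x - y|) :
    ∀ x ∈ Set.Icc (0:ℝ) 1, ∀ y ∈ Set.Icc (0:ℝ) 1,
      |Qm m f x - Qm m f y| ≤ (3 / 2) * L * |x - y| := by
  have hm' : (0:ℝ) < m := by exact_mod_cast hm
  have hK : (0:ℝ) ≤ (3/2) * L := by linarith
  have key : ∀ j : ℕ, j ≤ m →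
      ∀ x ∈ Set.Icc (0:ℝ) ((j:ℝ)/m), ∀ y ∈ Set.Icc (0:ℝ) ((j:ℝ)/m),
      |Qm m f x - Qm m f y| ≤ (3/2) * L * |x - y| := by
    intro j
    induction j with
    | zero =>
      intro _ x hx y hy
      simp only [Nat.cast_zero, zero_div] at hx hy
      have hx0 : x = 0 := le_antisymm hx.2 hx.1
      have hy0 : y = 0 := le_antisymm hy.2 hy.1
      subst hx0; subst hy0
      simp
    | succ j ih =>
      intro hjm
      have hj : j < m := by omega
      have hstep := lip_cell m j (by omega) hj f L hL hlip
      have hprev := ih (by omega)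
      have h0j : (0:ℝ) ≤ (j:ℝ)/m := by positivity
      have hjj : (j:ℝ)/m ≤ ((j:ℝ)+1)/m := by gcongr <;> linarith
      have := lip_glue hK h0j hjj hprev hstep
      intro x hx y hy
      push_cast at hx hy
      exact this x hx y hy
  have h1 : ((m:ℝ))/m = 1 := div_self hm'.ne'
  intro x hx y hy
  exact key m le_rfl x (by rw [h1]; exact hx) y (by rw [h1]; exact hy)
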